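/- For every dimension d ≥ 1 there exists a constant c > 0 such that for all integers 1 ≤ n ≤ N there exist finite sets S_R, S_B ⊂ ℝ^d with |S_R| = n and |S_B| = N such that the number of distinct values Mar(V), taken over all subsets V ⊆ S_R ∪ S_B that contain at least one red and at least one blue point and are strongly separable, is at least c · n · N^d. -/

import Mathlib

open scoped RealInnerProductSpace

/-- The hyperplane `{x : ⟪w, x⟫ = c}`. -/
def hplane (d : ℕ) (w : EuclideanSpace ℝ (Fin d)) (c : ℝ) :
    Set (EuclideanSpace ℝ (Fin d)) :=
  {x | ⟪w, x⟫ = c}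

/-- The margin `M_h(T) = min_{a ∈ T} dist(a, h)` of a hyperplane `h` w.r.t. a set `T`. -/
noncomputable def margin (d : ℕ) (T h : Set (EuclideanSpace ℝ (Fin d))) : ℝ :=
  sInf ((fun a => Metric.infDist a h) '' T)

/-- `(w, c)` strictly separates the red set `VR` from the blue set `VB`. -/
def StrictSep (d : ℕ) (VR VB : Set (EuclideanSpace ℝ (Fin d)))
    (w : EuclideanSpace ℝ (Fin d)) (c : ℝ) : Prop :=
  (∀ r ∈ VR, ⟪w, r⟫ < c) ∧ ∀ b ∈ VB, c < ⟪w, b⟫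

/-- `m` is the separation-margin `Mar(V)` of the bichromatic dataset `(VR, VB)`:
the margin of its maximum-margin separator. -/
def IsMar (d : ℕ) (VR VB : Finset (EuclideanSpace ℝ (Fin d))) (m : ℝ) : Prop :=
  ∃ (w : EuclideanSpace ℝ (Fin d)) (c : ℝ), w ≠ 0 ∧ StrictSep d ↑VR ↑VB w c ∧
    (∀ (w' : EuclideanSpace ℝ (Fin d)) (c' : ℝ), w' ≠ 0 → StrictSep d ↑VR ↑VB w' c' →
      margin d (↑VR ∪ ↑VB) (hplane d w' c') ≤ margin d (↑VR ∪ ↑VB) (hplane d w c)) ∧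
    m = margin d (↑VR ∪ ↑VB) (hplane d w c)

section Helpers
variable {d : ℕ}

lemma mem_hplane_foot (w : EuclideanSpace ℝ (Fin d)) (hw : w ≠ 0) (c : ℝ)
    (a : EuclideanSpace ℝ (Fin d)) :
    a - ((⟪w, a⟫ - c) / ‖w‖ ^ 2) • w ∈ hplane d w c := by
  have hw2 : ‖w‖ ^ 2 ≠ 0 := pow_ne_zero _ (norm_ne_zero_iff.2 hw)
  simp only [hplane, Set.mem_setOf_eq, inner_sub_right, real_inner_smul_right,
    real_inner_self_eq_norm_sq]
  field_simp
  ring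

lemma hplane_nonempty (w : EuclideanSpace ℝ (Fin d)) (hw : w ≠ 0) (c : ℝ) :
    (hplane d w c).Nonempty :=
  ⟨_, mem_hplane_foot w hw c 0⟩

lemma infDist_hplane_le (w : EuclideanSpace ℝ (Fin d)) (hw : w ≠ 0) (c : ℝ)
    (a : EuclideanSpace ℝ (Fin d)) :
    Metric.infDist a (hplane d w c) ≤ |⟪w, a⟫ - c| / ‖w‖ := by
  have hwn : ‖w‖ ≠ 0 := norm_ne_zero_iff.2 hw
  calc Metric.infDist a (hplane d w c) ≤ dist a (a - ((⟪w, a⟫ - c) / ‖w‖ ^ 2) • w) :=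
      Metric.infDist_le_dist_of_mem (mem_hplane_foot w hw c a)
    _ = ‖((⟪w, a⟫ - c) / ‖w‖ ^ 2) • w‖ := by
        rw [dist_eq_norm]; congr 1; abel
    _ = |⟪w, a⟫ - c| / ‖w‖ := by
        rw [norm_smul, Real.norm_eq_abs, abs_div]
        rw [abs_of_nonneg (by positivity : (0:ℝ) ≤ ‖w‖ ^ 2)]
        field_simp

lemma le_infDist_hplane (w : EuclideanSpace ℝ (Fin d)) (hw : ‖w‖ = 1) (c : ℝ)
    (a : EuclideanSpace ℝ (Fin d)) :
    |⟪w, a⟫ - c| ≤ Metric.infDist a (hplane d w c) := by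
  have hne : (hplane d w c).Nonempty :=
    hplane_nonempty w (by intro h; rw [h] at hw; simp at hw) c
  rw [Metric.infDist_eq_iInf]
  have : Nonempty (hplane d w c) := hne.to_subtype
  refine le_ciInf fun y => ?_
  have hy : ⟪w, (y : EuclideanSpace ℝ (Fin d))⟫ = c := y.2
  calc |⟪w, a⟫ - c| = |⟪w, a - y⟫| := by rw [inner_sub_right, hy]
    _ ≤ ‖w‖ * ‖a - (y : EuclideanSpace ℝ (Fin d))‖ := abs_real_inner_le_norm _ _
    _ = dist a y := by rw [hw, one_mul, dist_eq_norm]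

end Helpers

section Mar
variable {d : ℕ}

lemma margin_le_infDist {V h : Set (EuclideanSpace ℝ (Fin d))} {a : EuclideanSpace ℝ (Fin d)}
    (ha : a ∈ V) : margin d V h ≤ Metric.infDist a h := by
  apply csInf_le
  · exact ⟨0, fun v hv => by
      rcases hv with ⟨x, _, rfl⟩
      exact Metric.infDist_nonneg⟩
  · exact ⟨a, ha, rfl⟩

lemma isMar_of (r p : EuclideanSpace ℝ (Fin d)) (VB : Finset (EuclideanSpace ℝ (Fin d)))
    (hVB : VB.Nonempty) (D : ℝ) (hD : 0 < D)
    (hnorm : ‖p - r‖ = D)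
    (horth : ∀ b ∈ VB, ⟪p - r, b - p⟫ = 0)
    {ι : Type} [Fintype ι] (cf : ι → ℝ) (f : ι → EuclideanSpace ℝ (Fin d))
    (hf : ∀ i, f i ∈ VB) (hc0 : ∀ i, 0 ≤ cf i) (hc1 : ∑ i, cf i = 1)
    (hcp : ∑ i, cf i • f i = p) :
    IsMar d {r} VB (D / 2) := by
  classical
  set w : EuclideanSpace ℝ (Fin d) := D⁻¹ • (p - r) with hw_def
  have hpr : p - r ≠ 0 := by
    intro h; rw [h, norm_zero] at hnorm; exact hD.ne' hnorm.symm
  have hwnorm : ‖w‖ = 1 := by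
    rw [hw_def, norm_smul, Real.norm_eq_abs, abs_of_nonneg (inv_nonneg.2 hD.le), hnorm]
    field_simp
  have hw0 : w ≠ 0 := by
    intro h; rw [h, norm_zero] at hwnorm; norm_num at hwnorm
  set c : ℝ := ⟪w, r⟫ + D / 2 with hc_def
  have hwr : ⟪w, r⟫ = c - D / 2 := by rw [hc_def]; ring
  have hwpr : ⟪w, p - r⟫ = D := by
    rw [hw_def, real_inner_smul_left, real_inner_self_eq_norm_sq, hnorm]
    field_simp
  have hwb : ∀ b ∈ VB, ⟪w, b⟫ = c + D / 2 := by
    intro b hb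
    have h1 : ⟪w, b - p⟫ = 0 := by
      rw [hw_def, real_inner_smul_left, horth b hb, mul_zero]
    have : ⟪w, b⟫ = ⟪w, b - p⟫ + ⟪w, p - r⟫ + ⟪w, r⟫ := by
      rw [inner_sub_right, inner_sub_right]; ring
    rw [this, h1, hwpr, hwr]; ring
  -- the set V
  set V : Set (EuclideanSpace ℝ (Fin d)) := (↑({r} : Finset (EuclideanSpace ℝ (Fin d))) ∪ ↑VB)
  have hrV : r ∈ V := Set.mem_union_left _ (by simp)
  -- margin of our hyperplane is D/2
  have habs : ∀ a ∈ V, |⟪w, a⟫ - c| = D / 2 := by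
    intro a haV
    rcases haV with ha | ha
    · simp only [Finset.coe_singleton, Set.mem_singleton_iff] at ha
      rw [ha, hwr]; rw [abs_of_nonpos (by linarith), ]; ring
    · rw [hwb a ha]; rw [abs_of_nonneg (by linarith)]; ring
  have hmargin : margin d V (hplane d w c) = D / 2 := by
    apply le_antisymm
    · calc margin d V (hplane d w c) ≤ Metric.infDist r (hplane d w c) :=
            margin_le_infDist hrV
        _ ≤ |⟪w, r⟫ - c| / ‖w‖ := infDist_hplane_le w hw0 c r
        _ = D / 2 := by rw [habs r hrV, hwnorm, div_one]
    · apply le_csInf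
      · exact ⟨_, ⟨r, hrV, rfl⟩⟩
      · rintro v ⟨a, haV, rfl⟩
        calc D / 2 = |⟪w, a⟫ - c| := (habs a haV).symm
          _ ≤ Metric.infDist a (hplane d w c) := le_infDist_hplane w hwnorm c a
  refine ⟨w, c, hw0, ?_, ?_, ?_⟩
  · constructor
    · intro x hx
      simp only [Finset.coe_singleton, Set.mem_singleton_iff] at hx
      rw [hx, hwr]; linarith
    · intro b hb
      rw [hwb b hb]; linarith
  · -- optimality
    intro w' c' hw' hsep'
    rw [hmargin]
    set m' := margin d V (hplane d w' c') with hm'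
    have hw'n : (0:ℝ) < ‖w'‖ := norm_pos_iff.2 hw'
    have hred : m' * ‖w'‖ ≤ c' - ⟪w', r⟫ := by
      have h1 : m' ≤ |⟪w', r⟫ - c'| / ‖w'‖ :=
        le_trans (margin_le_infDist hrV) (infDist_hplane_le w' hw' c' r)
      have h2 : ⟪w', r⟫ < c' := hsep'.1 r (by simp)
      have h3 : |⟪w', r⟫ - c'| = c' - ⟪w', r⟫ := by rw [abs_of_nonpos (by linarith)]; ring
      rw [h3] at h1
      calc m' * ‖w'‖ ≤ ((c' - ⟪w', r⟫) / ‖w'‖) * ‖w'‖ := by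
            apply mul_le_mul_of_nonneg_right h1 hw'n.le
        _ = c' - ⟪w', r⟫ := by field_simp
    have hblue : ∀ i : ι, m' * ‖w'‖ ≤ ⟪w', f i⟫ - c' := by
      intro i
      have hmem : f i ∈ V := Set.mem_union_right _ (hf i)
      have h1 : m' ≤ |⟪w', f i⟫ - c'| / ‖w'‖ :=
        le_trans (margin_le_infDist hmem) (infDist_hplane_le w' hw' c' (f i))
      have h2 : c' < ⟪w', f i⟫ := hsep'.2 (f i) (hf i)
      have h3 : |⟪w', f i⟫ - c'| = ⟪w', f i⟫ - c' := abs_of_nonneg (by linarith)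
      rw [h3] at h1
      calc m' * ‖w'‖ ≤ ((⟪w', f i⟫ - c') / ‖w'‖) * ‖w'‖ :=
            mul_le_mul_of_nonneg_right h1 hw'n.le
        _ = ⟪w', f i⟫ - c' := by field_simp
    have hp : m' * ‖w'‖ ≤ ⟪w', p⟫ - c' := by
      have := Finset.sum_le_sum (fun i (_ : i ∈ Finset.univ) =>
        mul_le_mul_of_nonneg_left (hblue i) (hc0 i))
      have hL : ∑ i, cf i * (m' * ‖w'‖) = m' * ‖w'‖ := by
        rw [← Finset.sum_mul, hc1, one_mul]
      have hR : ∑ i, cf i * (⟪w', f i⟫ - c') = ⟪w', p⟫ - c' := by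
        have e1 : ∑ i, cf i * (⟪w', f i⟫ - c') = (∑ i, cf i * ⟪w', f i⟫) - (∑ i, cf i) * c' := by
          rw [Finset.sum_mul, ← Finset.sum_sub_distrib]
          exact Finset.sum_congr rfl fun i _ => by ring
        have e2 : ⟪w', p⟫ = ∑ i, cf i * ⟪w', f i⟫ := by
          rw [← hcp, inner_sum]
          exact Finset.sum_congr rfl fun i _ => real_inner_smul_right _ _ _
        rw [e1, hc1, one_mul, e2]
      rw [hL] at this
      rw [hR] at this
      exact this
    have hsum : 2 * (m' * ‖w'‖) ≤ ⟪w', p - r⟫ := by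
      rw [inner_sub_right]; linarith
    have hCS : ⟪w', p - r⟫ ≤ ‖w'‖ * D := by
      calc ⟪w', p - r⟫ ≤ ‖w'‖ * ‖p - r‖ := real_inner_le_norm _ _
        _ = ‖w'‖ * D := by rw [hnorm]
    nlinarith
  · exact hmargin.symm

lemma isMar_unique {VR VB : Finset (EuclideanSpace ℝ (Fin d))} {m m' : ℝ}
    (h : IsMar d VR VB m) (h' : IsMar d VR VB m') : m = m' := by
  obtain ⟨w, c, hw, hs, hopt, rfl⟩ := h
  obtain ⟨w', c', hw', hs', hopt', rfl⟩ := h'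
  exact le_antisymm (hopt' w c hw hs) (hopt w' c' hw' hs')

end Mar

namespace Stmt12Aux
open Finset

noncomputable local instance (d : ℕ) : DecidableEq (EuclideanSpace ℝ (Fin d)) :=
  Classical.decEq _

/-! ### Scalar data -/

noncomputable def eps (K M : ℕ) : ℝ := ((M : ℝ) ^ K)⁻¹

noncomputable def Lam (K M : ℕ) : ℝ := eps K M / (6 * (K + 1))

noncomputable def lam (K M n : ℕ) (i : Fin n) : ℝ := (((i : ℕ) : ℝ) + 1) * Lam K M / n

noncomputable def aval (K M : ℕ) (k : Fin K) (t : Fin M) : ℝ :=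
  1 + eps K M * t * (M : ℝ) ^ (k : ℕ)

noncomputable def nuv (K M : ℕ) (k : Fin K) (t : Fin M) : ℝ := Real.sqrt (aval K M k t)

noncomputable def xv (K M : ℕ) (k : Fin K) (t : Fin M) : ℝ := (nuv K M k t)⁻¹

noncomputable def Sv (K M : ℕ) (τ : Fin K → Fin M) : ℝ := ∑ k, aval K M k (τ k)

section Scalars
variable {K M n : ℕ}

lemma oneleM (hM : 1 ≤ M) : (1:ℝ) ≤ (M:ℝ) := by exact_mod_cast hM

lemma Mpow_pos (hM : 1 ≤ M) : (0:ℝ) < (M:ℝ) ^ K :=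
  pow_pos (lt_of_lt_of_le one_pos (oneleM hM)) K

lemma eps_pos (hM : 1 ≤ M) : 0 < eps K M := inv_pos.2 (Mpow_pos hM)

lemma one_le_Mpow (hM : 1 ≤ M) : (1:ℝ) ≤ (M:ℝ) ^ K := one_le_pow₀ (oneleM hM)

lemma eps_le_one (hM : 1 ≤ M) : eps K M ≤ 1 := by
  rw [eps]
  exact inv_le_one_of_one_le₀ (one_le_Mpow hM)

lemma Lam_pos (hM : 1 ≤ M) : 0 < Lam K M := by
  apply div_pos (eps_pos hM); positivity

lemma Lam_le (hM : 1 ≤ M) : Lam K M ≤ eps K M / (6 * (K + 1)) := le_refl _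

lemma Lam_le_one_twelfth (hK : 1 ≤ K) (hM : 1 ≤ M) : Lam K M ≤ 1 / 12 := by
  rw [Lam]
  have h1 : eps K M ≤ 1 := eps_le_one hM
  have h0 : 0 < eps K M := eps_pos hM
  have hK0 : (1:ℝ) ≤ (K:ℝ) := by exact_mod_cast hK
  rw [div_le_div_iff₀ (by positivity) (by norm_num)]
  nlinarith

lemma lam_pos (hM : 1 ≤ M) (i : Fin n) : 0 < lam K M n i := by
  have : 0 < Lam K M := Lam_pos hM
  have hn : 0 < n := i.pos
  have : (0:ℝ) < n := by exact_mod_cast hn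
  rw [lam]
  positivity

lemma lam_le_Lam (hM : 1 ≤ M) (i : Fin n) : lam K M n i ≤ Lam K M := by
  have hL : 0 < Lam K M := Lam_pos hM
  have hn0 : (0:ℝ) < n := by exact_mod_cast i.pos
  rw [lam, div_le_iff₀ hn0]
  have hi : ((i : ℕ) : ℝ) + 1 ≤ (n : ℝ) := by
    have := i.isLt
    exact_mod_cast Nat.succ_le_of_lt this
  nlinarith

lemma lam_strictMono (hM : 1 ≤ M) {i j : Fin n} (h : i < j) :
    lam K M n i < lam K M n j := by
  have hL : 0 < Lam K M := Lam_pos hM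
  have hn0 : (0:ℝ) < n := by exact_mod_cast i.pos
  have hij : ((i : ℕ) : ℝ) < ((j : ℕ) : ℝ) := by exact_mod_cast h
  rw [lam, lam, div_lt_div_iff₀ hn0 hn0]
  nlinarith [mul_pos (mul_pos (sub_pos.2 hij) hL) hn0]

lemma one_le_aval (hM : 1 ≤ M) (k : Fin K) (t : Fin M) : 1 ≤ aval K M k t := by
  have h1 : 0 < eps K M := eps_pos hM
  have h2 : (0:ℝ) ≤ (t : ℕ) := Nat.cast_nonneg _
  have h3 : (0:ℝ) < (M:ℝ) ^ (k : ℕ) := pow_pos (lt_of_lt_of_le one_pos (oneleM hM)) _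
  rw [aval]
  nlinarith [mul_nonneg (mul_nonneg h1.le h2) h3.le]

lemma aval_le_two (hM : 1 ≤ M) (k : Fin K) (t : Fin M) : aval K M k t ≤ 2 := by
  have h1 : 0 < eps K M := eps_pos hM
  have hM0 : (0:ℝ) < (M:ℝ) := lt_of_lt_of_le one_pos (oneleM hM)
  have ht : ((t : ℕ) : ℝ) < (M : ℝ) := by exact_mod_cast t.isLt
  have hk : (M:ℝ) ^ ((k:ℕ) + 1) ≤ (M:ℝ) ^ K :=
    pow_le_pow_right₀ (oneleM hM) (Nat.succ_le_of_lt k.isLt)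
  have hpow : (0:ℝ) < (M:ℝ) ^ (k : ℕ) := pow_pos hM0 _
  have key : ((t : ℕ) : ℝ) * (M:ℝ) ^ (k : ℕ) ≤ (M:ℝ) ^ K := by
    calc ((t : ℕ) : ℝ) * (M:ℝ) ^ (k : ℕ) ≤ (M:ℝ) * (M:ℝ) ^ (k : ℕ) := by nlinarith
      _ = (M:ℝ) ^ ((k:ℕ) + 1) := by ring
      _ ≤ (M:ℝ) ^ K := hk
  have : eps K M * (((t : ℕ) : ℝ) * (M:ℝ) ^ (k : ℕ)) ≤ eps K M * ((M:ℝ) ^ K) :=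
    mul_le_mul_of_nonneg_left key h1.le
  have heps : eps K M * ((M:ℝ) ^ K) = 1 := by
    rw [eps]; field_simp
  rw [aval]
  nlinarith

lemma aval_pos (hM : 1 ≤ M) (k : Fin K) (t : Fin M) : 0 < aval K M k t :=
  lt_of_lt_of_le one_pos (one_le_aval hM k t)

lemma one_le_nuv (hM : 1 ≤ M) (k : Fin K) (t : Fin M) : 1 ≤ nuv K M k t := by
  rw [nuv]
  rw [show (1:ℝ) = Real.sqrt 1 by simp]
  exact Real.sqrt_le_sqrt (one_le_aval hM k t)

lemma nuv_pos (hM : 1 ≤ M) (k : Fin K) (t : Fin M) : 0 < nuv K M k t :=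
  lt_of_lt_of_le one_pos (one_le_nuv hM k t)

lemma nuv_sq (hM : 1 ≤ M) (k : Fin K) (t : Fin M) : nuv K M k t ^ 2 = aval K M k t :=
  Real.sq_sqrt (by linarith [one_le_aval (K := K) hM k t])

lemma nuv_le (hM : 1 ≤ M) (k : Fin K) (t : Fin M) : nuv K M k t ≤ Real.sqrt 2 := by
  rw [nuv]
  exact Real.sqrt_le_sqrt (aval_le_two hM k t)

lemma nuv_le_two (hM : 1 ≤ M) (k : Fin K) (t : Fin M) : nuv K M k t ≤ 2 := by
  refine le_trans (nuv_le hM k t) ?_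
  nlinarith [Real.sq_sqrt (by norm_num : (0:ℝ) ≤ 2), Real.sqrt_nonneg 2]

lemma xv_pos (hM : 1 ≤ M) (k : Fin K) (t : Fin M) : 0 < xv K M k t :=
  inv_pos.2 (nuv_pos hM k t)

lemma xv_le_one (hM : 1 ≤ M) (k : Fin K) (t : Fin M) : xv K M k t ≤ 1 :=
  inv_le_one_of_one_le₀ (one_le_nuv hM k t)

lemma nuv_mul_xv (hM : 1 ≤ M) (k : Fin K) (t : Fin M) : nuv K M k t * xv K M k t = 1 := by
  rw [xv, mul_inv_cancel₀ (nuv_pos hM k t).ne']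

lemma aval_mul_xv_sq (hM : 1 ≤ M) (k : Fin K) (t : Fin M) :
    aval K M k t * (xv K M k t * xv K M k t) = 1 := by
  have h := nuv_sq (K := K) hM k t
  rw [xv, ← h]
  field_simp [(nuv_pos (K := K) hM k t).ne']

lemma aval_mul_xv (hM : 1 ≤ M) (k : Fin K) (t : Fin M) :
    aval K M k t * xv K M k t = nuv K M k t := by
  have h := nuv_sq (K := K) hM k t
  rw [xv, ← h]
  field_simp [(nuv_pos (K := K) hM k t).ne']

/-! ### The sum formula -/

lemma Sv_eq (τ : Fin K → Fin M) :
    Sv K M τ = K + eps K M * ((finFunctionFinEquiv τ : ℕ) : ℝ) := by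
  rw [Sv, finFunctionFinEquiv_apply]
  push_cast
  simp only [aval]
  rw [Finset.sum_add_distrib, Finset.mul_sum]
  simp [mul_assoc]

lemma Sv_lb (hM : 1 ≤ M) (τ : Fin K → Fin M) : (K : ℝ) ≤ Sv K M τ := by
  rw [Sv_eq]
  have h1 : 0 < eps K M := eps_pos hM
  have h2 : (0:ℝ) ≤ ((finFunctionFinEquiv τ : ℕ) : ℝ) := Nat.cast_nonneg _
  nlinarith

lemma Sv_pos (hK : 1 ≤ K) (hM : 1 ≤ M) (τ : Fin K → Fin M) : 0 < Sv K M τ := by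
  have := Sv_lb (K := K) hM τ
  have hK' : (1:ℝ) ≤ (K:ℝ) := by exact_mod_cast hK
  linarith

lemma eps_mul_u_lt_one (hM : 1 ≤ M) (τ : Fin K → Fin M) :
    eps K M * ((finFunctionFinEquiv τ : ℕ) : ℝ) < 1 := by
  have h1 : 0 < eps K M := eps_pos hM
  have hu : ((finFunctionFinEquiv τ : ℕ) : ℝ) < (M:ℝ) ^ K := by
    have := (finFunctionFinEquiv τ).isLt
    exact_mod_cast this
  have heps : eps K M * ((M:ℝ) ^ K) = 1 := by rw [eps]; field_simp
  nlinarith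

lemma Sv_ub (hM : 1 ≤ M) (τ : Fin K → Fin M) : Sv K M τ < (K : ℝ) + 1 := by
  rw [Sv_eq]
  have := eps_mul_u_lt_one (K := K) hM τ
  linarith

end Scalars

/-! ### The distance values and their distinctness -/

noncomputable def Dv (K M n : ℕ) (hK : 0 < K) (i : Fin n) (τ : Fin K → Fin M) : ℝ :=
  (1 + lam K M n i * nuv K M ⟨0, hK⟩ (τ ⟨0, hK⟩)) / Real.sqrt (Sv K M τ)

section Dlemmas
variable {K M n : ℕ}

lemma numer_pos (hK : 0 < K) (hM : 1 ≤ M) (i : Fin n) (τ : Fin K → Fin M) :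
    0 < 1 + lam K M n i * nuv K M ⟨0, hK⟩ (τ ⟨0, hK⟩) := by
  have h1 := lam_pos (K := K) (M := M) hM i
  have h2 := nuv_pos (K := K) hM ⟨0, hK⟩ (τ ⟨0, hK⟩)
  nlinarith

lemma numer_le (hK : 0 < K) (hM : 1 ≤ M) (i : Fin n) (τ : Fin K → Fin M) :
    1 + lam K M n i * nuv K M ⟨0, hK⟩ (τ ⟨0, hK⟩) ≤ 1 + 2 * Lam K M := by
  have h1 := lam_le_Lam (K := K) (M := M) hM i
  have h2 := nuv_le_two (K := K) hM ⟨0, hK⟩ (τ ⟨0, hK⟩)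
  have h3 := lam_pos (K := K) (M := M) hM i
  have h4 := one_le_nuv (K := K) hM ⟨0, hK⟩ (τ ⟨0, hK⟩)
  nlinarith

lemma Dv_pos (hK : 0 < K) (hM : 1 ≤ M) (i : Fin n) (τ : Fin K → Fin M) : 0 < Dv K M n hK i τ := by
  have h1 := numer_pos hK hM i τ
  have h2 : 0 < Real.sqrt (Sv K M τ) := Real.sqrt_pos.2 (Sv_pos hK hM τ)
  exact div_pos h1 h2

lemma Dv_lt (hK : 0 < K) (hM : 1 ≤ M) {i i' : Fin n} {τ τ' : Fin K → Fin M}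
    (h : (finFunctionFinEquiv τ : ℕ) < (finFunctionFinEquiv τ' : ℕ)) :
    Dv K M n hK i' τ' < Dv K M n hK i τ := by
  set A := 1 + lam K M n i * nuv K M ⟨0, hK⟩ (τ ⟨0, hK⟩) with hA
  set A' := 1 + lam K M n i' * nuv K M ⟨0, hK⟩ (τ' ⟨0, hK⟩) with hA'
  have hS : 0 < Sv K M τ := Sv_pos hK hM τ
  have hS' : 0 < Sv K M τ' := Sv_pos hK hM τ'
  have hsq : 0 < Real.sqrt (Sv K M τ) := Real.sqrt_pos.2 hS
  have hsq' : 0 < Real.sqrt (Sv K M τ') := Real.sqrt_pos.2 hS'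
  have hA1 : 1 ≤ A := by
    have h1 := (lam_pos (K := K) (M := M) hM i).le
    have h2 := (nuv_pos (K := K) hM ⟨0, hK⟩ (τ ⟨0, hK⟩)).le
    nlinarith
  have hA'pos : 0 < A' := numer_pos hK hM i' τ'
  have hA'le : A' ≤ 1 + 2 * Lam K M := numer_le hK hM i' τ'
  have hLam : 0 < Lam K M := Lam_pos hM
  have hLam12 : Lam K M ≤ 1 / 12 := Lam_le_one_twelfth hK hM
  -- key quadratic inequality
  have hKey : A' ^ 2 * Sv K M τ < A ^ 2 * Sv K M τ' := by
    have e1 : A' ^ 2 ≤ 1 + 5 * Lam K M := by nlinarith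
    have e2 : Sv K M τ < (K : ℝ) + 1 := Sv_ub hM τ
    have e3 : Sv K M τ + eps K M ≤ Sv K M τ' := by
      rw [Sv_eq, Sv_eq]
      have : ((finFunctionFinEquiv τ : ℕ) : ℝ) + 1 ≤ ((finFunctionFinEquiv τ' : ℕ) : ℝ) := by
        exact_mod_cast h
      have heps := eps_pos (K := K) hM
      nlinarith
    have e4 : Lam K M * ((K : ℝ) + 1) = eps K M / 6 := by
      rw [Lam]
      have : (6:ℝ) * ((K:ℝ) + 1) ≠ 0 := by positivity
      field_simp
    have heps := eps_pos (K := K) hM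
    have e5 : (1 + 5 * Lam K M) * Sv K M τ < Sv K M τ + eps K M := by nlinarith
    have e6 : A' ^ 2 * Sv K M τ ≤ (1 + 5 * Lam K M) * Sv K M τ := by nlinarith
    have hA2 : 1 ≤ A ^ 2 := by nlinarith
    have e7 : Sv K M τ' ≤ A ^ 2 * Sv K M τ' := by nlinarith [mul_le_mul_of_nonneg_right hA2 hS'.le]
    linarith
  rw [Dv, Dv, div_lt_div_iff₀ hsq' hsq]
  refine lt_of_pow_lt_pow_left₀ 2 (by positivity) ?_
  have r1 : (A' * Real.sqrt (Sv K M τ)) ^ 2 = A' ^ 2 * Sv K M τ := by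
    rw [mul_pow, Real.sq_sqrt hS.le]
  have r2 : (A * Real.sqrt (Sv K M τ')) ^ 2 = A ^ 2 * Sv K M τ' := by
    rw [mul_pow, Real.sq_sqrt hS'.le]
  rw [r1, r2]
  exact hKey

lemma Dv_inj (hK : 0 < K) (hM : 1 ≤ M) : Function.Injective
    (fun p : Fin n × (Fin K → Fin M) => Dv K M n hK p.1 p.2) := by
  rintro ⟨i, τ⟩ ⟨i', τ'⟩ h
  simp only at h
  rcases lt_trichotomy (finFunctionFinEquiv τ : ℕ) (finFunctionFinEquiv τ' : ℕ) with hu | hu | hu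
  · exact absurd h (ne_of_gt (Dv_lt hK hM hu))
  · have hττ : τ = τ' := by
      apply finFunctionFinEquiv.injective
      exact Fin.val_injective hu
    subst hττ
    have hnu := nuv_pos (K := K) hM ⟨0, hK⟩ (τ ⟨0, hK⟩)
    have hsq : 0 < Real.sqrt (Sv K M τ) := Real.sqrt_pos.2 (Sv_pos hK hM τ)
    have hlam : lam K M n i = lam K M n i' := by
      rw [Dv, Dv, div_eq_div_iff hsq.ne' hsq.ne'] at h
      have h2 := mul_right_cancel₀ hsq.ne' h
      have h3 : lam K M n i * nuv K M ⟨0, hK⟩ (τ ⟨0, hK⟩)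
          = lam K M n i' * nuv K M ⟨0, hK⟩ (τ ⟨0, hK⟩) := by linarith
      exact mul_right_cancel₀ hnu.ne' h3
    have : i = i' := by
      rcases lt_trichotomy i i' with hii | hii | hii
      · exact absurd hlam (ne_of_lt (lam_strictMono hM hii))
      · exact hii
      · exact absurd hlam.symm (ne_of_lt (lam_strictMono hM hii))
    rw [this]
  · exact absurd h.symm (ne_of_gt (Dv_lt hK hM hu))

lemma key0 (hK : 0 < K) (hM : 1 ≤ M) (i : Fin n) (τ : Fin K → Fin M) :
    (lam K M n i * nuv K M ⟨0, hK⟩ (τ ⟨0, hK⟩)) * Sv K M τ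
      ≤ (1 + lam K M n i * nuv K M ⟨0, hK⟩ (τ ⟨0, hK⟩)) * aval K M ⟨0, hK⟩ (τ ⟨0, hK⟩) := by
  set lv := lam K M n i * nuv K M ⟨0, hK⟩ (τ ⟨0, hK⟩) with hlv
  have hlv0 : 0 < lv := mul_pos (lam_pos hM i) (nuv_pos hM _ _)
  have hlv_le : lv ≤ 2 * Lam K M := by
    have h1 := lam_le_Lam (K := K) (M := M) hM i
    have h2 := nuv_le_two (K := K) hM ⟨0, hK⟩ (τ ⟨0, hK⟩)
    have h3 := (lam_pos (K := K) (M := M) hM i).le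
    have h4 := one_le_nuv (K := K) hM ⟨0, hK⟩ (τ ⟨0, hK⟩)
    nlinarith
  have hS : 0 < Sv K M τ := Sv_pos hK hM τ
  have hSub : Sv K M τ < (K:ℝ) + 1 := Sv_ub hM τ
  have hL : Lam K M * ((K:ℝ) + 1) = eps K M / 6 := by
    rw [Lam]
    have : (6:ℝ) * ((K:ℝ) + 1) ≠ 0 := by positivity
    field_simp
  have heps1 : eps K M ≤ 1 := eps_le_one hM
  have hLpos : 0 < Lam K M := Lam_pos hM
  have ha1 : 1 ≤ aval K M ⟨0, hK⟩ (τ ⟨0, hK⟩) := one_le_aval hM _ _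
  have h5 : lv * Sv K M τ ≤ 2 * Lam K M * ((K:ℝ) + 1) := by nlinarith
  have h6 : 1 ≤ (1 + lv) * aval K M ⟨0, hK⟩ (τ ⟨0, hK⟩) := by nlinarith
  nlinarith

end Dlemmas

/-! ### Geometry -/

noncomputable def Bp (d K M : ℕ) (hKd : K ≤ d) (k : Fin K) (t : Fin M) :
    EuclideanSpace ℝ (Fin d) :=
  EuclideanSpace.single (Fin.castLE hKd k) (xv K M k t)

noncomputable def Rp (d K M n : ℕ) (hd : 0 < d) (i : Fin n) : EuclideanSpace ℝ (Fin d) :=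
  EuclideanSpace.single ⟨0, hd⟩ (-(lam K M n i))

noncomputable def nu (d K M : ℕ) (hKd : K ≤ d) (τ : Fin K → Fin M) :
    EuclideanSpace ℝ (Fin d) :=
  ∑ k, aval K M k (τ k) • Bp d K M hKd k (τ k)

section Geometry
variable {d K M n : ℕ}

lemma single_neg (j : Fin d) (a : ℝ) :
    EuclideanSpace.single j (-a) = -EuclideanSpace.single j a := by
  ext l
  simp only [EuclideanSpace.single_apply, PiLp.neg_apply, EuclideanSpace.single_apply]
  split <;> simp

lemma inner_Bp_left (hKd : K ≤ d) (k : Fin K) (t : Fin M) (v : EuclideanSpace ℝ (Fin d)) :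
    ⟪Bp d K M hKd k t, v⟫ = xv K M k t * v (Fin.castLE hKd k) := by
  rw [Bp]
  rw [EuclideanSpace.inner_single_left]
  simp

lemma inner_Bp_Bp (hKd : K ≤ d) (k k' : Fin K) (t t' : Fin M) :
    ⟪Bp d K M hKd k t, Bp d K M hKd k' t'⟫
      = if k = k' then xv K M k t * xv K M k' t' else 0 := by
  rw [inner_Bp_left, Bp, EuclideanSpace.single_apply]
  by_cases h : k = k'
  · subst h
    simp
  · rw [if_neg (fun hc => h ((Fin.castLE_injective hKd) hc)), if_neg h, mul_zero]

lemma inner_nu_Bp (hKd : K ≤ d) (hM : 1 ≤ M) (τ : Fin K → Fin M) (j : Fin K) :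
    ⟪nu d K M hKd τ, Bp d K M hKd j (τ j)⟫ = 1 := by
  rw [nu, sum_inner]
  have : ∀ k : Fin K, ⟪aval K M k (τ k) • Bp d K M hKd k (τ k), Bp d K M hKd j (τ j)⟫
      = if k = j then aval K M k (τ k) * (xv K M k (τ k) * xv K M j (τ j)) else 0 := by
    intro k
    rw [real_inner_smul_left, inner_Bp_Bp]
    by_cases h : k = j
    · subst h; simp [mul_assoc]
    · simp [h]
  rw [Finset.sum_congr rfl fun k _ => this k, Finset.sum_ite_eq' Finset.univ j]
  simp [aval_mul_xv_sq hM]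

lemma inner_nu_nu (hKd : K ≤ d) (hM : 1 ≤ M) (τ : Fin K → Fin M) :
    ⟪nu d K M hKd τ, nu d K M hKd τ⟫ = Sv K M τ := by
  nth_rewrite 1 [nu]
  rw [sum_inner]
  have : ∀ k : Fin K, ⟪aval K M k (τ k) • Bp d K M hKd k (τ k), nu d K M hKd τ⟫
      = aval K M k (τ k) := by
    intro k
    rw [real_inner_smul_left, real_inner_comm, inner_nu_Bp hKd hM, mul_one]
  rw [Finset.sum_congr rfl fun k _ => this k, Sv]

lemma norm_nu (hKd : K ≤ d) (hM : 1 ≤ M) (τ : Fin K → Fin M) :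
    ‖nu d K M hKd τ‖ = Real.sqrt (Sv K M τ) := by
  have h := inner_nu_nu hKd hM τ
  rw [real_inner_self_eq_norm_sq] at h
  rw [← h, Real.sqrt_sq (norm_nonneg _)]

lemma castLE_zero (hd : 0 < d) (hK : 0 < K) (hKd : K ≤ d) :
    Fin.castLE hKd ⟨0, hK⟩ = (⟨0, hd⟩ : Fin d) := rfl

lemma inner_nu_Rp (hd : 0 < d) (hK : 0 < K) (hKd : K ≤ d) (hM : 1 ≤ M)
    (τ : Fin K → Fin M) (i : Fin n) :
    ⟪nu d K M hKd τ, Rp d K M n hd i⟫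
      = -(lam K M n i) * nuv K M ⟨0, hK⟩ (τ ⟨0, hK⟩) := by
  rw [nu, sum_inner]
  have : ∀ k : Fin K, ⟪aval K M k (τ k) • Bp d K M hKd k (τ k), Rp d K M n hd i⟫
      = if k = (⟨0, hK⟩ : Fin K) then aval K M k (τ k) * xv K M k (τ k) * (-(lam K M n i))
        else 0 := by
    intro k
    rw [real_inner_smul_left, inner_Bp_left, Rp, EuclideanSpace.single_apply]
    by_cases h : k = (⟨0, hK⟩ : Fin K)
    · subst h
      rw [if_pos (castLE_zero hd hK hKd), if_pos rfl]
      ring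
    · rw [if_neg, if_neg h, mul_zero, mul_zero]
      intro hc
      exact h (Fin.castLE_injective hKd (by rw [hc, castLE_zero hd hK hKd]))
  rw [Finset.sum_congr rfl fun k _ => this k, Finset.sum_ite_eq' Finset.univ]
  simp [aval_mul_xv hM]
  ring

end Geometry

/-! ### The maximum-margin value of each chosen sub-dataset -/

section Construction
variable {d K M n : ℕ}

lemma isMar_construction (hd : 0 < d) (hK : 0 < K) (hKd : K ≤ d) (hM : 1 ≤ M)
    (i : Fin n) (τ : Fin K → Fin M) :
    IsMar d {Rp d K M n hd i}
      (Finset.image (fun k => Bp d K M hKd k (τ k)) Finset.univ)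
      (Dv K M n hK i τ / 2) := by
  classical
  haveI : Nonempty (Fin K) := ⟨⟨0, hK⟩⟩
  set k0 : Fin K := ⟨0, hK⟩ with hk0
  set lv : ℝ := lam K M n i * nuv K M k0 (τ k0) with hlv
  set S : ℝ := Sv K M τ with hS_def
  have hS : 0 < S := Sv_pos hK hM τ
  have hSub : S < (K:ℝ) + 1 := Sv_ub hM τ
  set μ : ℝ := (1 + lv) / S with hmu
  have hlv0 : 0 < lv := mul_pos (lam_pos hM i) (nuv_pos hM k0 (τ k0))
  have hlv_le : lv ≤ 2 * Lam K M := by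
    have h1 := lam_le_Lam (K := K) (M := M) hM i
    have h2 := nuv_le_two (K := K) hM k0 (τ k0)
    have h3 := (lam_pos (K := K) (M := M) hM i).le
    have h4 := one_le_nuv (K := K) hM k0 (τ k0)
    rw [hlv]
    nlinarith
  have hmu_pos : 0 < μ := div_pos (by linarith) hS
  set f : Fin K → EuclideanSpace ℝ (Fin d) := fun k => Bp d K M hKd k (τ k) with hf_def
  set cf : Fin K → ℝ := fun k => μ * aval K M k (τ k) - if k = k0 then lv else 0 with hcf
  set p : EuclideanSpace ℝ (Fin d) := ∑ k, cf k • f k with hp_def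
  set r : EuclideanSpace ℝ (Fin d) := Rp d K M n hd i with hr_def
  set VB : Finset (EuclideanSpace ℝ (Fin d)) :=
    Finset.image (fun k => Bp d K M hKd k (τ k)) Finset.univ with hVB_def
  -- p - r = μ • nu
  have hsingle : (lv) • Bp d K M hKd k0 (τ k0) = EuclideanSpace.single ⟨0, hd⟩ (lam K M n i) := by
    rw [Bp, castLE_zero hd hK hKd]
    ext l
    simp only [PiLp.smul_apply, EuclideanSpace.single_apply, smul_eq_mul, mul_ite, mul_zero]
    congr 1
    rw [hlv, mul_assoc, nuv_mul_xv hM, mul_one]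
  have hr_eq : r = -EuclideanSpace.single ⟨0, hd⟩ (lam K M n i) := by
    rw [hr_def, Rp, single_neg]
  have hps : p - r = μ • nu d K M hKd τ := by
    have h1 : p = μ • nu d K M hKd τ - (lv) • Bp d K M hKd k0 (τ k0) := by
      have e : ∀ k, cf k • f k = (μ * aval K M k (τ k)) • f k
          - (if k = k0 then lv • f k else 0) := by
        intro k
        rw [hcf]
        simp only
        rw [sub_smul, ite_smul, zero_smul]
      rw [hp_def, Finset.sum_congr rfl (fun k _ => e k), Finset.sum_sub_distrib]
      congr 1
      · rw [nu, Finset.smul_sum]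
        exact Finset.sum_congr rfl fun k _ => (smul_smul _ _ _).symm
      · rw [Finset.sum_ite_eq' Finset.univ k0 (fun k => lv • f k)]
        simp only [Finset.mem_univ, if_true]
        rfl
    rw [h1, hsingle, hr_eq]
    abel
  have hp_eq : p = r + μ • nu d K M hKd τ := by
    rw [← hps]; abel
  -- inner products
  have hnuB : ∀ k : Fin K, ⟪nu d K M hKd τ, f k⟫ = 1 := fun k => inner_nu_Bp hKd hM τ k
  have hnuR : ⟪nu d K M hKd τ, r⟫ = -(lam K M n i) * nuv K M k0 (τ k0) :=
    inner_nu_Rp hd hK hKd hM τ i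
  have hnunu : ⟪nu d K M hKd τ, nu d K M hKd τ⟫ = S := inner_nu_nu hKd hM τ
  have hmuS : μ * S = 1 + lv := by rw [hmu]; field_simp
  have hnup : ⟪nu d K M hKd τ, p⟫ = 1 := by
    rw [hp_eq, inner_add_right, real_inner_smul_right, hnuR, hnunu, hmuS, hlv]
    ring
  -- D
  set D : ℝ := Dv K M n hK i τ with hD_def
  have hD : 0 < D := Dv_pos hK hM i τ
  have hsqS : 0 < Real.sqrt S := Real.sqrt_pos.2 hS
  have hDalt : D * Real.sqrt S = 1 + lv := by
    rw [hD_def, Dv, ← hlv, ← hS_def]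
    field_simp
  have hnorm : ‖p - r‖ = D := by
    rw [hps, norm_smul, Real.norm_eq_abs, abs_of_nonneg hmu_pos.le, norm_nu hKd hM, ← hS_def]
    refine mul_right_cancel₀ hsqS.ne' ?_
    rw [mul_assoc, Real.mul_self_sqrt hS.le, hmuS, hDalt]
  -- apply the abstract lemma
  have horth : ∀ b ∈ VB, ⟪p - r, b - p⟫ = 0 := by
    intro b hb
    rw [hVB_def, Finset.mem_image] at hb
    obtain ⟨k, _, rfl⟩ := hb
    rw [hps, real_inner_smul_left, inner_sub_right, hnuB k, hnup]
    ring
  have hf_mem : ∀ k : Fin K, f k ∈ VB := by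
    intro k
    rw [hVB_def]
    exact Finset.mem_image_of_mem _ (Finset.mem_univ k)
  have hc0 : ∀ k : Fin K, 0 ≤ cf k := by
    intro k
    rw [hcf]
    simp only
    by_cases h : k = k0
    · subst h
      rw [if_pos rfl]
      have := key0 hK hM i τ
      rw [← hlv, ← hS_def] at this
      rw [sub_nonneg, hmu, div_mul_eq_mul_div, le_div_iff₀ hS]
      linarith
    · rw [if_neg h, sub_zero]
      exact mul_nonneg hmu_pos.le (by linarith [one_le_aval (K := K) hM k (τ k)])
  have hc1 : ∑ k, cf k = 1 := by
    have e : ∀ k, cf k = μ * aval K M k (τ k) - (if k = k0 then lv else 0) := fun k => rfl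
    rw [Finset.sum_congr rfl (fun k _ => e k), Finset.sum_sub_distrib, ← Finset.mul_sum,
      Finset.sum_ite_eq' Finset.univ k0 (fun _ => lv)]
    simp only [Finset.mem_univ, if_true]
    have hsum : ∑ k, aval K M k (τ k) = S := by rw [hS_def, Sv]
    rw [hsum, hmuS]
    ring
  have hVBne : VB.Nonempty := ⟨f k0, hf_mem k0⟩
  have := isMar_of r p VB hVBne D hD hnorm horth cf f hf_mem hc0 hc1 hp_def.symm
  exact this

end Construction

/-! ### The data sets -/

section Sets
variable {d K M n N : ℕ}

lemma single_inj1 {i i' : Fin d} {a a' : ℝ} (ha : a ≠ 0)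
    (h : EuclideanSpace.single i a = EuclideanSpace.single i' a') : i = i' ∧ a = a' := by
  have h1 : (EuclideanSpace.single i a : EuclideanSpace ℝ (Fin d)) i
      = EuclideanSpace.single i' a' i := by rw [h]
  rw [EuclideanSpace.single_apply, EuclideanSpace.single_apply, if_pos rfl] at h1
  by_cases hii : i = i'
  · refine ⟨hii, ?_⟩
    rw [if_pos hii] at h1
    exact h1
  · rw [if_neg hii] at h1
    exact absurd h1 ha

lemma lam_inj (hM : 1 ≤ M) : Function.Injective (lam K M n) := by
  intro i j h
  rcases lt_trichotomy i j with hij | hij | hij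
  · exact absurd h (ne_of_lt (lam_strictMono hM hij))
  · exact hij
  · exact absurd h.symm (ne_of_lt (lam_strictMono hM hij))

lemma Rp_inj (hd : 0 < d) (hM : 1 ≤ M) : Function.Injective (Rp d K M n hd) := by
  intro i j h
  have := single_inj1 (by
    have := lam_pos (K := K) (M := M) hM i
    intro hc
    rw [neg_eq_zero] at hc
    linarith) h
  have h2 : lam K M n i = lam K M n j := by
    have := this.2
    linarith [this]
  exact lam_inj hM h2

lemma xv_inj (hM : 1 ≤ M) (k : Fin K) : Function.Injective (xv K M k) := by
  intro t t' h
  have h1 : nuv K M k t = nuv K M k t' := by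
    have := nuv_pos (K := K) hM k t
    have := nuv_pos (K := K) hM k t'
    rw [xv, xv] at h
    exact inv_injective h
  have h2 : aval K M k t = aval K M k t' := by
    rw [← nuv_sq (K := K) hM k t, ← nuv_sq (K := K) hM k t', h1]
  rw [aval, aval] at h2
  have heps := eps_pos (K := K) hM
  have hpow : (0:ℝ) < (M:ℝ) ^ (k:ℕ) := pow_pos (lt_of_lt_of_le one_pos (oneleM hM)) _
  have h2' : eps K M * ((t:ℕ):ℝ) * (M:ℝ) ^ (k:ℕ)
      = eps K M * ((t':ℕ):ℝ) * (M:ℝ) ^ (k:ℕ) := by linarith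
  have h3 : eps K M * ((t:ℕ):ℝ) = eps K M * ((t':ℕ):ℝ) := mul_right_cancel₀ hpow.ne' h2'
  have h4 : ((t : ℕ) : ℝ) = ((t' : ℕ) : ℝ) := mul_left_cancel₀ heps.ne' h3
  exact Fin.val_injective (by exact_mod_cast h4)

lemma Bp_inj (hKd : K ≤ d) (hM : 1 ≤ M) :
    Function.Injective (fun kt : Fin K × Fin M => Bp d K M hKd kt.1 kt.2) := by
  rintro ⟨k, t⟩ ⟨k', t'⟩ h
  simp only [Bp] at h
  have := single_inj1 (xv_pos (K := K) hM k t).ne' h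
  have hk : k = k' := Fin.castLE_injective hKd this.1
  subst hk
  have ht : t = t' := xv_inj hM k this.2
  rw [ht]

noncomputable def SRset (d K M n : ℕ) (hd : 0 < d) : Finset (EuclideanSpace ℝ (Fin d)) :=
  Finset.image (Rp d K M n hd) Finset.univ

noncomputable def Pad (d : ℕ) (hd : 0 < d) (j : ℕ) : EuclideanSpace ℝ (Fin d) :=
  EuclideanSpace.single ⟨0, hd⟩ ((j : ℝ) + 2)

noncomputable def SBset (d K M N : ℕ) (hd : 0 < d) (hKd : K ≤ d) :
    Finset (EuclideanSpace ℝ (Fin d)) :=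
  (Finset.image (fun kt : Fin K × Fin M => Bp d K M hKd kt.1 kt.2) Finset.univ) ∪
    (Finset.image (fun j : Fin (N - K * M) => Pad d hd (j : ℕ)) Finset.univ)

lemma SRset_card (hd : 0 < d) (hM : 1 ≤ M) : (SRset d K M n hd).card = n := by
  rw [SRset, Finset.card_image_of_injective _ (Rp_inj hd hM), Finset.card_univ,
    Fintype.card_fin]

lemma Pad_inj (hd : 0 < d) : Function.Injective (fun j : Fin (N - K * M) => Pad d hd (j : ℕ)) := by
  intro j j' h
  simp only [Pad] at h
  have h2 := single_inj1 (by positivity) h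
  have : ((j : ℕ) : ℝ) = ((j' : ℕ) : ℝ) := by linarith [h2.2]
  exact Fin.val_injective (by exact_mod_cast this)

lemma SBset_card (hd : 0 < d) (hKd : K ≤ d) (hM : 1 ≤ M) (hKM : K * M ≤ N) :
    (SBset d K M N hd hKd).card = N := by
  have hdisj : Disjoint
      (Finset.image (fun kt : Fin K × Fin M => Bp d K M hKd kt.1 kt.2) Finset.univ)
      (Finset.image (fun j : Fin (N - K * M) => Pad d hd (j : ℕ)) Finset.univ) := by
    rw [Finset.disjoint_left]
    rintro x hx hx'
    rw [Finset.mem_image] at hx hx'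
    obtain ⟨⟨k, t⟩, _, rfl⟩ := hx
    obtain ⟨j, _, hj⟩ := hx'
    rw [Pad, Bp] at hj
    have heq := single_inj1 (by positivity : ((j:ℕ):ℝ) + 2 ≠ 0) hj
    have hxle := xv_le_one (K := K) hM k t
    have hj0 : (0:ℝ) ≤ ((j:ℕ):ℝ) := Nat.cast_nonneg _
    linarith [heq.2]
  rw [SBset, Finset.card_union_of_disjoint hdisj,
    Finset.card_image_of_injective _ (Bp_inj hKd hM),
    Finset.card_image_of_injective _ (Pad_inj hd), Finset.card_univ, Finset.card_univ,
    Fintype.card_prod, Fintype.card_fin, Fintype.card_fin, Fintype.card_fin]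
  omega

end Sets


/-! ### The counting lemma -/

section Core
variable {d K M n N : ℕ}

lemma bigset_finite (SR SB : Finset (EuclideanSpace ℝ (Fin d))) :
    {m : ℝ | ∃ VR ⊆ SR, ∃ VB ⊆ SB, VR.Nonempty ∧ VB.Nonempty ∧
      IsMar d VR VB m}.Finite := by
  classical
  set I : Finset (Finset (EuclideanSpace ℝ (Fin d)) × Finset (EuclideanSpace ℝ (Fin d))) :=
    SR.powerset ×ˢ SB.powerset with hI
  have hsub : {m : ℝ | ∃ VR ⊆ SR, ∃ VB ⊆ SB, VR.Nonempty ∧ VB.Nonempty ∧ IsMar d VR VB m}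
      ⊆ ⋃ P ∈ (I : Set (Finset (EuclideanSpace ℝ (Fin d)) × Finset (EuclideanSpace ℝ (Fin d)))),
          {m : ℝ | IsMar d P.1 P.2 m} := by
    rintro m ⟨VR, hVR, VB, hVB, _, _, hmar⟩
    refine Set.mem_biUnion (x := (VR, VB)) ?_ hmar
    rw [hI]
    simp only [Finset.coe_product, Set.mem_prod, Finset.mem_coe, Finset.mem_powerset]
    exact ⟨hVR, hVB⟩
  refine Set.Finite.subset ?_ hsub
  refine Set.Finite.biUnion (Finset.finite_toSet _) fun P _ => ?_
  exact Set.Subsingleton.finite fun a ha b hb => isMar_unique ha hb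

lemma core_count (hd : 0 < d) (hK : 0 < K) (hKd : K ≤ d) (hM : 1 ≤ M) (hn : 0 < n)
    (hKM : K * M ≤ N) :
    ∃ SR SB : Finset (EuclideanSpace ℝ (Fin d)),
      SR.card = n ∧ SB.card = N ∧
      ((n * M ^ K : ℕ) : ℝ) ≤
        (({m : ℝ | ∃ VR ⊆ SR, ∃ VB ⊆ SB, VR.Nonempty ∧ VB.Nonempty ∧
          IsMar d VR VB m}.ncard : ℕ) : ℝ) := by
  classical
  refine ⟨SRset d K M n hd, SBset d K M N hd hKd, SRset_card hd hM,
    SBset_card hd hKd hM hKM, ?_⟩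
  set bigS := {m : ℝ | ∃ VR ⊆ SRset d K M n hd, ∃ VB ⊆ SBset d K M N hd hKd,
    VR.Nonempty ∧ VB.Nonempty ∧ IsMar d VR VB m} with hbigS
  set F : Fin n × (Fin K → Fin M) → ℝ := fun p => Dv K M n hK p.1 p.2 / 2 with hF
  have hFinj : Function.Injective F := by
    intro p q h
    rw [hF] at h
    simp only at h
    exact Dv_inj hK hM (by linarith : Dv K M n hK p.1 p.2 = Dv K M n hK q.1 q.2)
  have hrange : Set.range F ⊆ bigS := by
    rintro m ⟨⟨i, τ⟩, rfl⟩
    refine ⟨{Rp d K M n hd i}, ?_, Finset.image (fun k => Bp d K M hKd k (τ k)) Finset.univ,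
      ?_, Finset.singleton_nonempty _, ?_, ?_⟩
    · rw [Finset.singleton_subset_iff, SRset]
      exact Finset.mem_image_of_mem _ (Finset.mem_univ i)
    · intro b hb
      rw [Finset.mem_image] at hb
      obtain ⟨k, _, rfl⟩ := hb
      rw [SBset]
      apply Finset.mem_union_left
      exact Finset.mem_image_of_mem _ (Finset.mem_univ (k, τ k))
    · haveI : Nonempty (Fin K) := ⟨⟨0, hK⟩⟩
      exact ⟨_, Finset.mem_image_of_mem _ (Finset.mem_univ (⟨0, hK⟩ : Fin K))⟩
    · exact isMar_construction hd hK hKd hM i τ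
  have hfin : bigS.Finite := bigset_finite _ _
  have hcount : (Set.range F).ncard = n * M ^ K := by
    rw [← Set.image_univ, Set.ncard_image_of_injective _ hFinj, Set.ncard_univ,
      Nat.card_eq_fintype_card, Fintype.card_prod, Fintype.card_fin, Fintype.card_fun,
      Fintype.card_fin, Fintype.card_fin]
  have hle : (Set.range F).ncard ≤ bigS.ncard := Set.ncard_le_ncard hrange hfin
  rw [hcount] at hle
  exact_mod_cast hle

end Core
end Stmt12Aux

theorem stmt_12' (d : ℕ) (hd : 1 ≤ d) :
    ∃ c : ℝ, 0 < c ∧ ∀ n N : ℕ, 1 ≤ n → n ≤ N →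
      ∃ SR SB : Finset (EuclideanSpace ℝ (Fin d)),
        SR.card = n ∧ SB.card = N ∧
        c * n * (N : ℝ) ^ d ≤
          ({m : ℝ | ∃ VR ⊆ SR, ∃ VB ⊆ SB, VR.Nonempty ∧ VB.Nonempty ∧
            IsMar d VR VB m}.ncard : ℝ) := by
  have hd0 : 0 < d := hd
  have hdR : (1:ℝ) ≤ (d:ℝ) := by exact_mod_cast hd
  have h2d : (0:ℝ) < 2 * (d:ℝ) := by linarith
  have hpow : (0:ℝ) < (2 * (d:ℝ)) ^ d := pow_pos h2d d
  refine ⟨((2 * (d:ℝ)) ^ d)⁻¹, inv_pos.2 hpow, ?_⟩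
  intro n N hn hnN
  have hN : 0 < N := lt_of_lt_of_le hn hnN
  have hK0 : 0 < min d N := lt_min hd0 hN
  have hKd : min d N ≤ d := min_le_left _ _
  have hKN : min d N ≤ N := min_le_right _ _
  have hM1 : 1 ≤ N / min d N := (Nat.one_le_div_iff hK0).2 hKN
  have hKM : min d N * (N / min d N) ≤ N := by
    rw [mul_comm]
    exact Nat.div_mul_le_self N _
  obtain ⟨SR, SB, hSR, hSB, hcount⟩ :=
    Stmt12Aux.core_count (N := N) hd0 hK0 hKd hM1 hn hKM
  refine ⟨SR, SB, hSR, hSB, le_trans ?_ hcount⟩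
  push_cast
  -- key inequality
  have key : ((N:ℝ)) ^ d ≤ (2 * (d:ℝ)) ^ d * ((N / min d N : ℕ) : ℝ) ^ (min d N) := by
    rcases le_or_gt d N with hdN | hNd
    · have hKeq : min d N = d := min_eq_left hdN
      rw [hKeq]
      have hq : 1 ≤ N / d := by rw [← hKeq]; exact hM1
      have h1 : d * (N / d) + N % d = N := Nat.div_add_mod N d
      have h2 : N % d < d := Nat.mod_lt _ hd0
      have hNle : (N:ℝ) ≤ 2 * (d:ℝ) * ((N / d : ℕ) : ℝ) := by
        have e1 : ((d:ℝ)) * ((N / d : ℕ) : ℝ) + ((N % d : ℕ) : ℝ) = (N:ℝ) := by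
          exact_mod_cast h1
        have e2 : ((N % d : ℕ) : ℝ) < (d:ℝ) := by exact_mod_cast h2
        have e3 : (1:ℝ) ≤ ((N / d : ℕ) : ℝ) := by exact_mod_cast hq
        nlinarith
      calc ((N:ℝ)) ^ d ≤ (2 * (d:ℝ) * ((N / d : ℕ) : ℝ)) ^ d := by
            exact pow_le_pow_left₀ (Nat.cast_nonneg N) hNle d
        _ = (2 * (d:ℝ)) ^ d * ((N / d : ℕ) : ℝ) ^ d := mul_pow _ _ _
    · have hKeq : min d N = N := min_eq_right hNd.le
      rw [hKeq, Nat.div_self hN]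
      simp only [Nat.cast_one, one_pow, mul_one]
      refine pow_le_pow_left₀ (Nat.cast_nonneg N) ?_ d
      have : (N:ℝ) < (d:ℝ) := by exact_mod_cast hNd
      linarith
  have hstep : ((2 * (d:ℝ)) ^ d)⁻¹ * ((N:ℝ)) ^ d
      ≤ ((N / min d N : ℕ) : ℝ) ^ (min d N) := by
    rw [inv_mul_le_iff₀ hpow]
    exact key
  have hn0 : (0:ℝ) ≤ (n:ℝ) := Nat.cast_nonneg n
  calc ((2 * (d:ℝ)) ^ d)⁻¹ * (n:ℝ) * ((N:ℝ)) ^ d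
      = (n:ℝ) * (((2 * (d:ℝ)) ^ d)⁻¹ * ((N:ℝ)) ^ d) := by ring
    _ ≤ (n:ℝ) * ((N / min d N : ℕ) : ℝ) ^ (min d N) :=
        mul_le_mul_of_nonneg_left hstep hn0

/-- For every `d ≥ 1` there is `c > 0` such that for all `1 ≤ n ≤ N`
there are finite sets `S_R, S_B ⊆ ℝ^d` with `|S_R| = n` and `|S_B| = N` for which the
number of distinct values `Mar(V)`, taken over all strongly separable subsets
`V ⊆ S_R ∪ S_B` having at least one point of each color, is at least `c · n · N^d`. -/
theorem stmt_12 (d : ℕ) (hd : 1 ≤ d) :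
    ∃ c : ℝ, 0 < c ∧ ∀ n N : ℕ, 1 ≤ n → n ≤ N →
      ∃ SR SB : Finset (EuclideanSpace ℝ (Fin d)),
        SR.card = n ∧ SB.card = N ∧
        c * n * (N : ℝ) ^ d ≤
          ({m : ℝ | ∃ VR ⊆ SR, ∃ VB ⊆ SB, VR.Nonempty ∧ VB.Nonempty ∧
            IsMar d VR VB m}.ncard : ℝ) := by
  exact stmt_12' d hd
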